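/- Assume a satisfies the weakly degenerate (WD) or strongly degenerate (SD) hypothesis with degeneracy point x0 and constant K ∈ (0,2), and set b(x) := ∫_{x0}^x (y−x0)/a(y) dy. Then for every x ∈ [0,1] with x ≠ x0 one has 0 ≤ b(x) ≤ (x−x0)²/((2−K)a(x)). -/

import Mathlib

open MeasureTheory Set Filter

noncomputable section

/-- Absolute continuity of `f` on the interval `[a,b]`. -/
def ACOn (f : ℝ → ℝ) (a b : ℝ) : Prop :=
  ∀ ε > (0:ℝ), ∃ δ > (0:ℝ), ∀ n : ℕ, ∀ c d : Fin n → ℝ,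
    (∀ i, a ≤ c i ∧ c i ≤ d i ∧ d i ≤ b) →
    (∀ i j, i ≠ j → Set.Ioo (c i) (d i) ∩ Set.Ioo (c j) (d j) = ∅) →
    (∑ i, (d i - c i)) < δ → (∑ i, |f (d i) - f (c i)|) < ε

/-- Local absolute continuity on `[0, x0) ∪ (x0, 1]`, i.e. absolute continuity on every
compact subinterval of `[0,1]` avoiding `x0`. -/
def LocACOff (f : ℝ → ℝ) (x0 : ℝ) : Prop :=
  ∀ c d : ℝ, 0 ≤ c → c ≤ d → d ≤ 1 → x0 ∉ Set.Icc c d → ACOn f c d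

/-- The weakly degenerate hypothesis (WD). -/
structure WeaklyDegenerate (a : ℝ → ℝ) (x0 K : ℝ) : Prop where
  x0_mem : x0 ∈ Set.Ioo (0:ℝ) 1
  a_zero : a x0 = 0
  a_pos : ∀ x ∈ Set.Icc (0:ℝ) 1, x ≠ x0 → 0 < a x
  a_diff : ∀ x ∈ Set.Icc (0:ℝ) 1, x ≠ x0 → DifferentiableAt ℝ a x
  deriv_cont : ContinuousOn (deriv a) (Set.Icc 0 1 \ {x0})
  K_mem : K ∈ Set.Ioo (0:ℝ) 1
  ineq : ∀ x ∈ Set.Icc (0:ℝ) 1, x ≠ x0 → (x - x0) * deriv a x ≤ K * a x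

/-- The strongly degenerate hypothesis (SD); membership in `W^{1,∞}(0,1)` is encoded as
Lipschitz continuity on `[0,1]`. -/
structure StronglyDegenerate (a : ℝ → ℝ) (x0 K : ℝ) : Prop where
  x0_mem : x0 ∈ Set.Ioo (0:ℝ) 1
  a_zero : a x0 = 0
  a_pos : ∀ x ∈ Set.Icc (0:ℝ) 1, x ≠ x0 → 0 < a x
  a_diff : ∀ x ∈ Set.Icc (0:ℝ) 1, x ≠ x0 → DifferentiableAt ℝ a x
  deriv_cont : ContinuousOn (deriv a) (Set.Icc 0 1 \ {x0})
  lipschitz : ∃ L : NNReal, LipschitzOnWith L a (Set.Icc 0 1)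
  K_mem : K ∈ Set.Ico (1:ℝ) 2
  ineq : ∀ x ∈ Set.Icc (0:ℝ) 1, x ≠ x0 → (x - x0) * deriv a x ≤ K * a x

/-- Hypothesis 3.1: (WD) or (SD), together with the extra monotonicity assumption
on `a(x)/|x-x0|^θ` for some `θ ∈ (0, K]`. -/
def Hyp31 (a : ℝ → ℝ) (x0 K θ : ℝ) : Prop :=
  (WeaklyDegenerate a x0 K ∨ StronglyDegenerate a x0 K) ∧
  θ ∈ Set.Ioc (0:ℝ) K ∧
  AntitoneOn (fun x => a x / |x - x0| ^ θ) (Set.Ico 0 x0) ∧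
  MonotoneOn (fun x => a x / |x - x0| ^ θ) (Set.Ioc x0 1)

/-- Membership in the weighted space `H¹_a(0,1)`.  The flag `weak` records whether we are
in the weakly degenerate case, in which case global absolute continuity on `[0,1]` is
required; in the strongly degenerate case only local absolute continuity off `x0` holds. -/
def MemH1a (a : ℝ → ℝ) (x0 : ℝ) (weak : Prop) (u : ℝ → ℝ) : Prop :=
  (weak → ACOn u 0 1) ∧
  MemLp u 2 (volume.restrict (Set.Ioo (0:ℝ) 1)) ∧
  LocACOff u x0 ∧
  MemLp (fun x => Real.sqrt (a x) * deriv u x) 2 (volume.restrict (Set.Ioo (0:ℝ) 1)) ∧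
  u 0 = 0 ∧ u 1 = 0

/-- Membership in the weighted space `H²_a(0,1) = {u ∈ H¹_a : a u' ∈ H¹(0,1)}`. -/
def MemH2a (a : ℝ → ℝ) (x0 : ℝ) (weak : Prop) (u : ℝ → ℝ) : Prop :=
  MemH1a a x0 weak u ∧
  ACOn (fun x => a x * deriv u x) 0 1 ∧
  MemLp (fun x => a x * deriv u x) 2 (volume.restrict (Set.Ioo (0:ℝ) 1)) ∧
  MemLp (deriv (fun x => a x * deriv u x)) 2 (volume.restrict (Set.Ioo (0:ℝ) 1))

/-- The time weight `Θ(t) = [t(T-t)]^{-4}`. -/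
def Theta (T t : ℝ) : ℝ := 1 / (t * (T - t)) ^ 4

/-- The space weight `ψ(x) = c1 [∫_{x0}^x (y-x0)/a(y) dy - c2]`. -/
def psiC (a : ℝ → ℝ) (x0 c1 c2 : ℝ) (x : ℝ) : ℝ :=
  c1 * ((∫ y in x0..x, (y - x0) / a y) - c2)

/-- The Carleman weight `φ(t,x) = Θ(t) ψ(x)`. -/
def phiC (a : ℝ → ℝ) (x0 T c1 c2 : ℝ) (t x : ℝ) : ℝ :=
  Theta T t * psiC a x0 c1 c2 x

/-- Partial derivative in the first (time) variable. -/
def ptd (f : ℝ → ℝ → ℝ) : ℝ → ℝ → ℝ := fun t x => deriv (fun τ => f τ x) t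

/-- Partial derivative in the second (space) variable. -/
def pxd (f : ℝ → ℝ → ℝ) : ℝ → ℝ → ℝ := fun t x => deriv (fun y => f t y) x

/-- Membership in `V = L²(0,T;H²_a(0,1)) ∩ H¹(0,T;H¹_a(0,1))`. -/
def MemV (a : ℝ → ℝ) (x0 : ℝ) (weak : Prop) (T : ℝ) (v : ℝ → ℝ → ℝ) : Prop :=
  (∀ t ∈ Set.Ioo (0:ℝ) T, MemH2a a x0 weak (v t)) ∧
  (∀ x ∈ Set.Icc (0:ℝ) 1, ∀ t ∈ Set.Ioo (0:ℝ) T, DifferentiableAt ℝ (fun τ => v τ x) t) ∧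
  (∀ t ∈ Set.Ioo (0:ℝ) T, MemH1a a x0 weak (fun x => ptd v t x)) ∧
  (∀ x ∈ Set.Icc (0:ℝ) 1, ContinuousOn (fun τ => v τ x) (Set.Icc 0 T))

/-- The operator `L⁺_s w = (a w_x)_x - s φ_t w + s² a φ_x² w`. -/
def Lplus (a : ℝ → ℝ) (φ : ℝ → ℝ → ℝ) (s : ℝ) (w : ℝ → ℝ → ℝ) : ℝ → ℝ → ℝ :=
  fun t x => pxd (fun τ y => a y * pxd w τ y) t x
    - s * ptd φ t x * w t x + s ^ 2 * a x * (pxd φ t x) ^ 2 * w t x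

/-- The operator `L⁻_s w = w_t - 2 s a φ_x w_x - s (a φ_x)_x w`. -/
def Lminus (a : ℝ → ℝ) (φ : ℝ → ℝ → ℝ) (s : ℝ) (w : ℝ → ℝ → ℝ) : ℝ → ℝ → ℝ :=
  fun t x => ptd w t x - 2 * s * a x * pxd φ t x * pxd w t x
    - s * pxd (fun τ y => a y * pxd φ τ y) t x * w t x

/-- Membership in the class `W` of solutions of the homogeneous adjoint problem with
final datum in `D(A²)`; recall `W ⊂ C¹([0,T];H²_a(0,1))`. -/
def SolW (a : ℝ → ℝ) (x0 : ℝ) (weak : Prop) (T : ℝ) (v : ℝ → ℝ → ℝ) : Prop :=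
  (∀ t ∈ Set.Ioo (0:ℝ) T, ∀ x ∈ Set.Ioo (0:ℝ) 1,
    deriv (fun τ => v τ x) t + deriv (fun y => a y * deriv (fun z => v t z) y) x = 0) ∧
  (∀ t ∈ Set.Ioo (0:ℝ) T, v t 0 = 0 ∧ v t 1 = 0) ∧
  (∀ t ∈ Set.Icc (0:ℝ) T, MemH2a a x0 weak (v t)) ∧
  (∀ x ∈ Set.Icc (0:ℝ) 1, ∀ t ∈ Set.Icc (0:ℝ) T, DifferentiableAt ℝ (fun τ => v τ x) t) ∧
  (∀ t ∈ Set.Icc (0:ℝ) T, MemH2a a x0 weak (fun x => deriv (fun τ => v τ x) t)) ∧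
  MemH2a a x0 weak (fun x => deriv (fun y => a y * deriv (fun z => v T z) y) x)


section BBoundsAux

/-- Derivative of `(t - x0)^K / a t` to the right of `x0`. -/
private lemma bBounds_hasDerivAt_right (a : ℝ → ℝ) (x0 K t : ℝ) (ht : x0 < t)
    (hat : 0 < a t) (hd : DifferentiableAt ℝ a t) :
    HasDerivAt (fun s => (s - x0) ^ K / a s)
      (((1 * K * (t - x0) ^ (K - 1)) * a t - (t - x0) ^ K * deriv a t) / (a t) ^ 2) t := by
  have h1 : HasDerivAt (fun s : ℝ => s - x0) 1 t := (hasDerivAt_id t).sub_const x0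
  have h2 : HasDerivAt (fun s : ℝ => (s - x0) ^ K) (1 * K * (t - x0) ^ (K - 1)) t :=
    h1.rpow_const (Or.inl (sub_ne_zero.mpr (ne_of_gt ht)))
  exact h2.div hd.hasDerivAt (ne_of_gt hat)

/-- Derivative of `(x0 - t)^K / a t` to the left of `x0`. -/
private lemma bBounds_hasDerivAt_left (a : ℝ → ℝ) (x0 K t : ℝ) (ht : t < x0)
    (hat : 0 < a t) (hd : DifferentiableAt ℝ a t) :
    HasDerivAt (fun s => (x0 - s) ^ K / a s)
      ((((-1) * K * (x0 - t) ^ (K - 1)) * a t - (x0 - t) ^ K * deriv a t) / (a t) ^ 2) t := by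
  have h1 : HasDerivAt (fun s : ℝ => x0 - s) (-1) t := by
    simpa using (hasDerivAt_id t).const_sub x0
  have h2 : HasDerivAt (fun s : ℝ => (x0 - s) ^ K) ((-1) * K * (x0 - t) ^ (K - 1)) t :=
    h1.rpow_const (Or.inl (sub_ne_zero.mpr (ne_of_gt ht)))
  exact h2.div hd.hasDerivAt (ne_of_gt hat)

private lemma bBounds_mono_right (a : ℝ → ℝ) (x0 K : ℝ) (hx0 : x0 ∈ Set.Ioo (0:ℝ) 1)
    (hpos : ∀ x ∈ Set.Icc (0:ℝ) 1, x ≠ x0 → 0 < a x)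
    (hdiff : ∀ x ∈ Set.Icc (0:ℝ) 1, x ≠ x0 → DifferentiableAt ℝ a x)
    (hineq : ∀ x ∈ Set.Icc (0:ℝ) 1, x ≠ x0 → (x - x0) * deriv a x ≤ K * a x) :
    MonotoneOn (fun t => (t - x0) ^ K / a t) (Set.Ioc x0 1) := by
  have hmem : ∀ t ∈ Set.Ioc x0 1, t ∈ Set.Icc (0:ℝ) 1 ∧ t ≠ x0 := by
    intro t ht
    exact ⟨⟨le_trans hx0.1.le ht.1.le, ht.2⟩, ne_of_gt ht.1⟩
  have hder : ∀ t ∈ Set.Ioc x0 1, HasDerivAt (fun s => (s - x0) ^ K / a s)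
      (((1 * K * (t - x0) ^ (K - 1)) * a t - (t - x0) ^ K * deriv a t) / (a t) ^ 2) t := by
    intro t ht
    obtain ⟨h1, h2⟩ := hmem t ht
    exact bBounds_hasDerivAt_right a x0 K t ht.1 (hpos t h1 h2) (hdiff t h1 h2)
  apply monotoneOn_of_deriv_nonneg (convex_Ioc x0 1)
  · exact fun t ht => (hder t ht).continuousAt.continuousWithinAt
  · rw [interior_Ioc]
    exact fun t ht =>
      ((hder t (Set.Ioo_subset_Ioc_self ht)).differentiableAt).differentiableWithinAt
  · rw [interior_Ioc]
    intro t ht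
    rw [(hder t (Set.Ioo_subset_Ioc_self ht)).deriv]
    obtain ⟨h1, h2⟩ := hmem t (Set.Ioo_subset_Ioc_self ht)
    have hat : 0 < a t := hpos t h1 h2
    have ht0 : (0:ℝ) < t - x0 := sub_pos.2 ht.1
    have hsplit : (t - x0) ^ K = (t - x0) ^ (K - 1) * (t - x0) := by
      rw [← Real.rpow_add_one (ne_of_gt ht0)]; ring_nf
    have hrp : (0:ℝ) ≤ (t - x0) ^ (K - 1) := Real.rpow_nonneg ht0.le _
    have hi := hineq t h1 h2
    apply div_nonneg _ (by positivity)
    rw [hsplit]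
    nlinarith [mul_le_mul_of_nonneg_left hi hrp]

private lemma bBounds_mono_left (a : ℝ → ℝ) (x0 K : ℝ) (hx0 : x0 ∈ Set.Ioo (0:ℝ) 1)
    (hpos : ∀ x ∈ Set.Icc (0:ℝ) 1, x ≠ x0 → 0 < a x)
    (hdiff : ∀ x ∈ Set.Icc (0:ℝ) 1, x ≠ x0 → DifferentiableAt ℝ a x)
    (hineq : ∀ x ∈ Set.Icc (0:ℝ) 1, x ≠ x0 → (x - x0) * deriv a x ≤ K * a x) :
    AntitoneOn (fun t => (x0 - t) ^ K / a t) (Set.Ico 0 x0) := by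
  have hmem : ∀ t ∈ Set.Ico (0:ℝ) x0, t ∈ Set.Icc (0:ℝ) 1 ∧ t ≠ x0 := by
    intro t ht
    exact ⟨⟨ht.1, le_trans ht.2.le hx0.2.le⟩, ne_of_lt ht.2⟩
  have hder : ∀ t ∈ Set.Ico (0:ℝ) x0, HasDerivAt (fun s => (x0 - s) ^ K / a s)
      ((((-1) * K * (x0 - t) ^ (K - 1)) * a t - (x0 - t) ^ K * deriv a t) / (a t) ^ 2) t := by
    intro t ht
    obtain ⟨h1, h2⟩ := hmem t ht
    exact bBounds_hasDerivAt_left a x0 K t ht.2 (hpos t h1 h2) (hdiff t h1 h2)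
  apply antitoneOn_of_deriv_nonpos (convex_Ico 0 x0)
  · exact fun t ht => (hder t ht).continuousAt.continuousWithinAt
  · rw [interior_Ico]
    exact fun t ht =>
      ((hder t (Set.Ioo_subset_Ico_self ht)).differentiableAt).differentiableWithinAt
  · rw [interior_Ico]
    intro t ht
    rw [(hder t (Set.Ioo_subset_Ico_self ht)).deriv]
    obtain ⟨h1, h2⟩ := hmem t (Set.Ioo_subset_Ico_self ht)
    have hat : 0 < a t := hpos t h1 h2
    have ht0 : (0:ℝ) < x0 - t := sub_pos.2 ht.2
    have hsplit : (x0 - t) ^ K = (x0 - t) ^ (K - 1) * (x0 - t) := by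
      rw [← Real.rpow_add_one (ne_of_gt ht0)]; ring_nf
    have hrp : (0:ℝ) ≤ (x0 - t) ^ (K - 1) := Real.rpow_nonneg ht0.le _
    have hi := hineq t h1 h2
    apply div_nonpos_of_nonpos_of_nonneg _ (by positivity)
    rw [hsplit]
    nlinarith [mul_le_mul_of_nonneg_left hi hrp]

end BBoundsAux

/-- Bounds on `b(x) = ∫_{x0}^x (y-x0)/a(y) dy`: it is nonnegative and bounded by
`(x-x0)²/((2-K) a(x))` for `x ≠ x0`. -/
theorem b_bounds (a : ℝ → ℝ) (x0 K : ℝ)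
    (ha : WeaklyDegenerate a x0 K ∨ StronglyDegenerate a x0 K) :
    ∀ x ∈ Set.Icc (0:ℝ) 1, x ≠ x0 →
      0 ≤ (∫ y in x0..x, (y - x0) / a y) ∧
      (∫ y in x0..x, (y - x0) / a y) ≤ (x - x0) ^ 2 / ((2 - K) * a x) := by
  have hx0 : x0 ∈ Set.Ioo (0:ℝ) 1 := by rcases ha with h | h; exacts [h.x0_mem, h.x0_mem]
  have haz : a x0 = 0 := by rcases ha with h | h; exacts [h.a_zero, h.a_zero]
  have hpos : ∀ x ∈ Set.Icc (0:ℝ) 1, x ≠ x0 → 0 < a x := by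
    rcases ha with h | h; exacts [h.a_pos, h.a_pos]
  have hdiff : ∀ x ∈ Set.Icc (0:ℝ) 1, x ≠ x0 → DifferentiableAt ℝ a x := by
    rcases ha with h | h; exacts [h.a_diff, h.a_diff]
  have hineq : ∀ x ∈ Set.Icc (0:ℝ) 1, x ≠ x0 → (x - x0) * deriv a x ≤ K * a x := by
    rcases ha with h | h; exacts [h.ineq, h.ineq]
  have hK0 : 0 < K := by
    rcases ha with h | h
    · exact h.K_mem.1
    · linarith [h.K_mem.1]
  have hK2 : K < 2 := by
    rcases ha with h | h
    · linarith [h.K_mem.2]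
    · exact h.K_mem.2
  intro x hx hne
  have hax : 0 < a x := hpos x hx hne
  have h2K : (0:ℝ) < 2 - K := by linarith
  rcases lt_or_gt_of_ne hne with hlt | hgt
  · -- x < x0 : left case
    set M := (x0 - x) ^ K / a x with hM
    have hxx0 : (0:ℝ) < x0 - x := sub_pos.2 hlt
    have hM0 : 0 ≤ M := div_nonneg (Real.rpow_nonneg hxx0.le _) hax.le
    have hmono := bBounds_mono_left a x0 K hx0 hpos hdiff hineq
    have hb : ∀ y ∈ Set.Ico x x0, 0 ≤ (x0 - y) / a y ∧
        (x0 - y) / a y ≤ M * (x0 - y) ^ (1 - K) := by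
      intro y hy
      have hy1 : y ∈ Set.Icc (0:ℝ) 1 := ⟨le_trans hx.1 hy.1, le_trans hy.2.le hx0.2.le⟩
      have hyne : y ≠ x0 := ne_of_lt hy.2
      have hay : 0 < a y := hpos y hy1 hyne
      have hy0 : (0:ℝ) < x0 - y := sub_pos.2 hy.2
      refine ⟨by positivity, ?_⟩
      have hmono' : (x0 - y) ^ K / a y ≤ M := by
        rw [hM]
        exact hmono (Set.mem_Ico.2 ⟨hx.1, hlt⟩) (Set.mem_Ico.2 ⟨hy1.1, hy.2⟩) hy.1
      have key : (x0 - y) ^ K * (x0 - y) ^ (1 - K) = x0 - y := by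
        rw [← Real.rpow_add hy0]
        norm_num
      calc (x0 - y) / a y = ((x0 - y) ^ K / a y) * (x0 - y) ^ (1 - K) := by
            rw [div_mul_eq_mul_div, key]
        _ ≤ M * (x0 - y) ^ (1 - K) :=
            mul_le_mul_of_nonneg_right hmono' (Real.rpow_nonneg hy0.le _)
    have hflip : (∫ y in x0..x, (y - x0) / a y) = ∫ y in x..x0, (x0 - y) / a y := by
      rw [intervalIntegral.integral_symm x x0]
      have hng : ∀ y : ℝ, (x0 - y) / a y = -((y - x0) / a y) := fun y => by
        rw [← neg_div, neg_sub]
      simp only [hng, intervalIntegral.integral_neg]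
    have hIntDom : IntervalIntegrable (fun y => M * (x0 - y) ^ (1 - K)) volume x x0 := by
      have h1 : IntervalIntegrable (fun u : ℝ => u ^ (1 - K)) volume 0 (x0 - x) :=
        intervalIntegral.intervalIntegrable_rpow' (by linarith)
      have h2 := ((h1.comp_sub_left x0).const_mul M).symm
      simpa using h2
    have hIntg : IntervalIntegrable (fun y => (x0 - y) / a y) volume x x0 := by
      apply hIntDom.mono_fun
      · rw [Set.uIoc_of_le hlt.le, ← Measure.restrict_congr_set Ioo_ae_eq_Ioc]
        apply ContinuousOn.aestronglyMeasurable _ measurableSet_Ioo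
        intro y hy
        have hy1 : y ∈ Set.Icc (0:ℝ) 1 :=
          ⟨le_trans hx.1 hy.1.le, le_trans hy.2.le hx0.2.le⟩
        have hyne : y ≠ x0 := ne_of_lt hy.2
        exact ((continuousAt_const.sub continuousAt_id).div
          (hdiff y hy1 hyne).continuousAt (ne_of_gt (hpos y hy1 hyne))).continuousWithinAt
      · rw [Set.uIoc_of_le hlt.le, ← Measure.restrict_congr_set Ioo_ae_eq_Ioc]
        filter_upwards [ae_restrict_mem measurableSet_Ioo] with y hy
        obtain ⟨h0, h1⟩ := hb y ⟨hy.1.le, hy.2⟩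
        have hy0 : (0:ℝ) ≤ x0 - y := sub_nonneg.2 hy.2.le
        rw [Real.norm_eq_abs, Real.norm_eq_abs, abs_of_nonneg h0,
          abs_of_nonneg (mul_nonneg hM0 (Real.rpow_nonneg hy0 _))]
        exact h1
    rw [hflip]
    refine ⟨?_, ?_⟩
    · apply intervalIntegral.integral_nonneg hlt.le
      intro u hu
      rcases eq_or_lt_of_le hu.2 with h | h
      · rw [h]
        simp [sub_self]
      · exact (hb u ⟨hu.1, h⟩).1
    · have hpt : ∀ u ∈ Set.Icc x x0, (x0 - u) / a u ≤ M * (x0 - u) ^ (1 - K) := by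
        intro u hu
        rcases eq_or_lt_of_le hu.2 with h | h
        · rw [h]
          simp only [sub_self, zero_div]
          exact mul_nonneg hM0 (Real.rpow_nonneg le_rfl _)
        · exact (hb u ⟨hu.1, h⟩).2
      have hle := intervalIntegral.integral_mono_on hlt.le hIntg hIntDom hpt
      have hcomp : (∫ y in x..x0, M * (x0 - y) ^ (1 - K))
          = M * ((x0 - x) ^ (2 - K) / (2 - K)) := by
        rw [intervalIntegral.integral_const_mul]
        congr 1
        rw [intervalIntegral.integral_comp_sub_left (fun u : ℝ => u ^ (1 - K)) x0]
        rw [sub_self]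
        rw [integral_rpow (Or.inl (by linarith))]
        have he : 1 - K + 1 = 2 - K := by ring
        rw [he, Real.zero_rpow (ne_of_gt h2K), sub_zero]
      have hfin : M * ((x0 - x) ^ (2 - K) / (2 - K)) = (x - x0) ^ 2 / ((2 - K) * a x) := by
        have hpow : (x0 - x) ^ K * (x0 - x) ^ (2 - K) = (x - x0) ^ 2 := by
          rw [← Real.rpow_add hxx0]
          have h2n : K + (2 - K) = ((2:ℕ) : ℝ) := by push_cast; ring
          rw [h2n, Real.rpow_natCast]
          ring
        rw [hM, div_mul_div_comm, hpow, mul_comm (a x) (2 - K)]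
      rw [hcomp, hfin] at hle
      exact hle
  · -- x0 < x : right case
    set M := (x - x0) ^ K / a x with hM
    have hxx0 : (0:ℝ) < x - x0 := sub_pos.2 hgt
    have hM0 : 0 ≤ M := div_nonneg (Real.rpow_nonneg hxx0.le _) hax.le
    have hmono := bBounds_mono_right a x0 K hx0 hpos hdiff hineq
    have hb : ∀ y ∈ Set.Ioc x0 x, 0 ≤ (y - x0) / a y ∧
        (y - x0) / a y ≤ M * (y - x0) ^ (1 - K) := by
      intro y hy
      have hy1 : y ∈ Set.Icc (0:ℝ) 1 := ⟨le_trans hx0.1.le hy.1.le, le_trans hy.2 hx.2⟩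
      have hyne : y ≠ x0 := ne_of_gt hy.1
      have hay : 0 < a y := hpos y hy1 hyne
      have hy0 : (0:ℝ) < y - x0 := sub_pos.2 hy.1
      refine ⟨by positivity, ?_⟩
      have hmono' : (y - x0) ^ K / a y ≤ M := by
        rw [hM]
        exact hmono (Set.mem_Ioc.2 ⟨hy.1, hy1.2⟩) (Set.mem_Ioc.2 ⟨hgt, hx.2⟩) hy.2
      have key : (y - x0) ^ K * (y - x0) ^ (1 - K) = y - x0 := by
        rw [← Real.rpow_add hy0]
        norm_num
      calc (y - x0) / a y = ((y - x0) ^ K / a y) * (y - x0) ^ (1 - K) := by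
            rw [div_mul_eq_mul_div, key]
        _ ≤ M * (y - x0) ^ (1 - K) :=
            mul_le_mul_of_nonneg_right hmono' (Real.rpow_nonneg hy0.le _)
    have hIntDom : IntervalIntegrable (fun y => M * (y - x0) ^ (1 - K)) volume x0 x := by
      have h1 : IntervalIntegrable (fun u : ℝ => u ^ (1 - K)) volume 0 (x - x0) :=
        intervalIntegral.intervalIntegrable_rpow' (by linarith)
      have h2 := (h1.comp_sub_right x0).const_mul M
      simpa using h2
    have hIntg : IntervalIntegrable (fun y => (y - x0) / a y) volume x0 x := by
      apply hIntDom.mono_fun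
      · rw [Set.uIoc_of_le hgt.le]
        apply ContinuousOn.aestronglyMeasurable _ measurableSet_Ioc
        intro y hy
        have hy1 : y ∈ Set.Icc (0:ℝ) 1 := ⟨le_trans hx0.1.le hy.1.le, le_trans hy.2 hx.2⟩
        have hyne : y ≠ x0 := ne_of_gt hy.1
        exact ((continuousAt_id.sub continuousAt_const).div
          (hdiff y hy1 hyne).continuousAt (ne_of_gt (hpos y hy1 hyne))).continuousWithinAt
      · rw [Set.uIoc_of_le hgt.le]
        filter_upwards [ae_restrict_mem measurableSet_Ioc] with y hy
        obtain ⟨h0, h1⟩ := hb y hy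
        have hy0 : (0:ℝ) ≤ y - x0 := sub_nonneg.2 hy.1.le
        rw [Real.norm_eq_abs, Real.norm_eq_abs, abs_of_nonneg h0,
          abs_of_nonneg (mul_nonneg hM0 (Real.rpow_nonneg hy0 _))]
        exact h1
    refine ⟨?_, ?_⟩
    · apply intervalIntegral.integral_nonneg hgt.le
      intro u hu
      rcases eq_or_lt_of_le hu.1 with h | h
      · rw [← h]
        simp [sub_self]
      · exact (hb u ⟨h, hu.2⟩).1
    · have hpt : ∀ u ∈ Set.Icc x0 x, (u - x0) / a u ≤ M * (u - x0) ^ (1 - K) := by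
        intro u hu
        rcases eq_or_lt_of_le hu.1 with h | h
        · rw [← h]
          simp only [sub_self, zero_div]
          exact mul_nonneg hM0 (Real.rpow_nonneg le_rfl _)
        · exact (hb u ⟨h, hu.2⟩).2
      have hle := intervalIntegral.integral_mono_on hgt.le hIntg hIntDom hpt
      have hcomp : (∫ y in x0..x, M * (y - x0) ^ (1 - K))
          = M * ((x - x0) ^ (2 - K) / (2 - K)) := by
        rw [intervalIntegral.integral_const_mul]
        congr 1
        rw [intervalIntegral.integral_comp_sub_right (fun u : ℝ => u ^ (1 - K)) x0]
        rw [sub_self]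
        rw [integral_rpow (Or.inl (by linarith))]
        have he : 1 - K + 1 = 2 - K := by ring
        rw [he, Real.zero_rpow (ne_of_gt h2K), sub_zero]
      have hfin : M * ((x - x0) ^ (2 - K) / (2 - K)) = (x - x0) ^ 2 / ((2 - K) * a x) := by
        have hpow : (x - x0) ^ K * (x - x0) ^ (2 - K) = (x - x0) ^ 2 := by
          rw [← Real.rpow_add hxx0]
          have h2n : K + (2 - K) = ((2:ℕ) : ℝ) := by push_cast; ring
          rw [h2n, Real.rpow_natCast]
        rw [hM, div_mul_div_comm, hpow, mul_comm (a x) (2 - K)]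
      rw [hcomp, hfin] at hle
      exact hle
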